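/- Let n ≥ 2 and i ∈ [n−1]. The image of the map inv_i on the subgroup D_n of B_n and the image of inv_i on the subgroup F_n of B_n are both exactly the set {0, 1, ..., 2(n−i)+1}. -/

import Mathlib

/-- A signed permutation `π` of `[n]`: `π(i) = ε i · σ(i)` with `σ` a permutation
of `[n]` and signs `ε i ∈ {±1}`.  Positions are encoded by `Fin n`
(position `i ∈ [n]` corresponds to `⟨i-1, _⟩ : Fin n`). -/
structure SignedPerm (n : ℕ) where
  σ : Equiv.Perm (Fin n)
  ε : Fin n → ℤ
  hε : ∀ i, ε i = 1 ∨ ε i = -1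

namespace SignedPerm

variable {n : ℕ}

/-- The signed value `π(i) = ε i · σ(i) ∈ {-n, …, -1, 1, …, n}` (1-based value). -/
def val (π : SignedPerm n) (i : Fin n) : ℤ :=
  π.ε i * ((π.σ i : ℕ) + 1)

/-- The standard basis vector `e i` of `ℝ^n`. -/
def e (i : Fin n) : Fin n → ℝ := Pi.single i 1

/-- The action of a signed permutation on `ℝ^n`, determined by
`π · e i = ε i · e (σ i)`. -/
def act (π : SignedPerm n) (v : Fin n → ℝ) : Fin n → ℝ :=
  fun j => (π.ε (π.σ.symm j) : ℝ) * v (π.σ.symm j)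

/-- The positive root system `Φₙ⁺ = {e k, e i + e j, e i - e j : k, i < j}` of `Bₙ`. -/
def PhiPos (n : ℕ) : Set (Fin n → ℝ) :=
  {v | (∃ k : Fin n, v = e k) ∨ ∃ i j : Fin n, i < j ∧ (v = e i + e j ∨ v = e i - e j)}

/-- The positive roots `Φₙ,ᵢ⁺ = {e i, e i + e j, e i - e j : i < j ≤ n}`. -/
def PhiPosI (n : ℕ) (i : Fin n) : Set (Fin n → ℝ) :=
  {v | v = e i ∨ ∃ j : Fin n, i < j ∧ (v = e i + e j ∨ v = e i - e j)}

/-- The `i`-inversion number `invᵢ π = #{v ∈ Φₙ,ᵢ⁺ : π · v ∈ -Φₙ⁺}`. -/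
noncomputable def invi (i : Fin n) (π : SignedPerm n) : ℕ :=
  Set.ncard {v | v ∈ PhiPosI n i ∧ -(π.act v) ∈ PhiPos n}

/-- The inversion number `inv π = #{v ∈ Φₙ⁺ : π · v ∈ -Φₙ⁺}`. -/
noncomputable def inv (π : SignedPerm n) : ℕ :=
  Set.ncard {v | v ∈ PhiPos n ∧ -(π.act v) ∈ PhiPos n}

end SignedPerm

namespace SignedPerm

variable {n : ℕ}

open Finset

lemma e_apply (a b : Fin n) : e a b = if b = a then 1 else 0 := Pi.single_apply a 1 b

lemma e_self (a : Fin n) : e a a = 1 := by simp [e_apply]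

lemma e_of_ne {a j : Fin n} (h : j ≠ a) : e a j = 0 := by simp [e_apply, h]

lemma e_inj : Function.Injective (e (n := n)) := by
  intro a b h
  by_contra hne
  have h1 := congrFun h a
  norm_num [e_apply, hne, Ne.symm hne] at h1

lemma e_mem (k : Fin n) : e k ∈ PhiPos n := Or.inl ⟨k, rfl⟩

lemma add_mem {c d : Fin n} (hcd : c ≠ d) : e c + e d ∈ PhiPos n := by
  rcases lt_or_gt_of_ne hcd with h | h
  · exact Or.inr ⟨c, d, h, Or.inl rfl⟩
  · exact Or.inr ⟨d, c, h, Or.inl (add_comm (e c) (e d))⟩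

lemma neg_e_not_mem (c : Fin n) : -(e c) ∉ PhiPos n := by
  rintro (⟨k, hk⟩ | ⟨a, b, hab, hk | hk⟩)
  · rcases eq_or_ne c k with rfl | h
    · have h1 := congrFun hk c
      norm_num [e_apply] at h1
    · have h1 := congrFun hk c
      norm_num [e_apply, h, Ne.symm h] at h1
  · rcases eq_or_ne a c with rfl | h
    · have h1 := congrFun hk a
      norm_num [e_apply, hab.ne, hab.ne'] at h1
    · have h1 := congrFun hk a
      norm_num [e_apply, h, Ne.symm h, hab.ne, hab.ne'] at h1
  · rcases eq_or_ne a c with rfl | h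
    · have h1 := congrFun hk a
      norm_num [e_apply, hab.ne, hab.ne'] at h1
    · have h1 := congrFun hk a
      norm_num [e_apply, h, Ne.symm h, hab.ne, hab.ne'] at h1

lemma neg_add_not_mem (c d : Fin n) (hcd : c ≠ d) : -(e c + e d) ∉ PhiPos n := by
  rintro (⟨k, hk⟩ | ⟨a, b, hab, hk | hk⟩)
  · rcases eq_or_ne c k with rfl | h
    · have h1 := congrFun hk c
      norm_num [e_apply, hcd, Ne.symm hcd] at h1
    · have h1 := congrFun hk c
      norm_num [e_apply, h, Ne.symm h, hcd, Ne.symm hcd] at h1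
  · rcases eq_or_ne a c with rfl | h
    · rcases eq_or_ne a d with rfl | h'
      · exact hcd rfl
      · have h1 := congrFun hk a
        norm_num [e_apply, h', Ne.symm h', hab.ne, hab.ne'] at h1
    · rcases eq_or_ne a d with rfl | h'
      · have h1 := congrFun hk a
        norm_num [e_apply, h, Ne.symm h, hab.ne, hab.ne'] at h1
      · have h1 := congrFun hk a
        norm_num [e_apply, h, Ne.symm h, h', Ne.symm h', hab.ne, hab.ne'] at h1
  · rcases eq_or_ne a c with rfl | h
    · rcases eq_or_ne a d with rfl | h'
      · exact hcd rfl
      · have h1 := congrFun hk a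
        norm_num [e_apply, h', Ne.symm h', hab.ne, hab.ne'] at h1
    · rcases eq_or_ne a d with rfl | h'
      · have h1 := congrFun hk a
        norm_num [e_apply, h, Ne.symm h, hab.ne, hab.ne'] at h1
      · have h1 := congrFun hk a
        norm_num [e_apply, h, Ne.symm h, h', Ne.symm h', hab.ne, hab.ne'] at h1

lemma sub_mem_iff {c d : Fin n} (hcd : c ≠ d) : e c - e d ∈ PhiPos n ↔ c < d := by
  constructor
  · rintro (⟨k, hk⟩ | ⟨a, b, hab, hk | hk⟩)
    · exfalso
      rcases eq_or_ne d k with rfl | h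
      · have h1 := congrFun hk d
        norm_num [e_apply, hcd, Ne.symm hcd] at h1
      · have h1 := congrFun hk d
        norm_num [e_apply, h, Ne.symm h, hcd, Ne.symm hcd] at h1
    · exfalso
      rcases eq_or_ne d a with rfl | h
      · rcases eq_or_ne d b with rfl | h'
        · exact absurd rfl hab.ne
        · have h1 := congrFun hk d
          norm_num [e_apply, h', Ne.symm h', hcd, Ne.symm hcd] at h1
      · rcases eq_or_ne d b with rfl | h'
        · have h1 := congrFun hk d
          norm_num [e_apply, h, Ne.symm h, hcd, Ne.symm hcd] at h1
        · have h1 := congrFun hk d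
          norm_num [e_apply, h, Ne.symm h, h', Ne.symm h', hcd, Ne.symm hcd] at h1
    · have hca : c = a := by
        rcases eq_or_ne c a with h | h
        · exact h
        · exfalso
          rcases eq_or_ne c b with rfl | h2
          · have h1 := congrFun hk c
            norm_num [e_apply, h, Ne.symm h, hcd, Ne.symm hcd] at h1
          · have h1 := congrFun hk c
            norm_num [e_apply, h, Ne.symm h, h2, Ne.symm h2, hcd, Ne.symm hcd] at h1
      subst hca
      have hdb : d = b := by
        rcases eq_or_ne d b with h | h
        · exact h
        · exfalso
          have h1 := congrFun hk d
          norm_num [e_apply, h, Ne.symm h, hcd, Ne.symm hcd] at h1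
      subst hdb
      exact hab
  · intro h
    exact Or.inr ⟨c, d, h, Or.inr rfl⟩

lemma act_e' (π : SignedPerm n) (a : Fin n) :
    π.act (e a) = (π.ε a : ℝ) • e (π.σ a) := by
  funext j
  simp only [act, e_apply, Pi.smul_apply, smul_eq_mul, Equiv.symm_apply_eq]
  split_ifs with h
  · subst h
    rw [Equiv.symm_apply_apply]
  · ring

lemma act_add (π : SignedPerm n) (u v : Fin n → ℝ) :
    π.act (u + v) = π.act u + π.act v := by
  funext j
  simp only [act, Pi.add_apply]
  ring

lemma act_sub (π : SignedPerm n) (u v : Fin n → ℝ) :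
    π.act (u - v) = π.act u - π.act v := by
  funext j
  simp only [act, Pi.sub_apply]
  ring

lemma inv_e_iff (π : SignedPerm n) (a : Fin n) :
    -(π.act (e a)) ∈ PhiPos n ↔ π.ε a = -1 := by
  rcases π.hε a with h | h
  · have h1 : -(π.act (e a)) = -(e (π.σ a)) := by
      rw [act_e', h]; push_cast; rw [one_smul]
    rw [h1]
    constructor
    · intro hm; exact absurd hm (neg_e_not_mem _)
    · intro hc; rw [h] at hc; norm_num at hc
  · have h1 : -(π.act (e a)) = e (π.σ a) := by
      rw [act_e', h]; push_cast; rw [neg_one_smul, neg_neg]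
    rw [h1]
    exact ⟨fun _ => h, fun _ => e_mem _⟩

lemma inv_add_iff (π : SignedPerm n) (a b : Fin n) (hab : a ≠ b) :
    -(π.act (e a + e b)) ∈ PhiPos n ↔
      (π.ε a = 1 ∧ π.ε b = -1 ∧ π.σ b < π.σ a) ∨
      (π.ε a = -1 ∧ π.ε b = 1 ∧ π.σ a < π.σ b) ∨
      (π.ε a = -1 ∧ π.ε b = -1) := by
  have hσ : π.σ a ≠ π.σ b := fun hc => hab (π.σ.injective hc)
  have hadd : π.act (e a + e b) = (π.ε a : ℝ) • e (π.σ a) + (π.ε b : ℝ) • e (π.σ b) := by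
    rw [act_add, act_e', act_e']
  rcases π.hε a with ha | ha <;> rcases π.hε b with hb | hb
  · have h1 : -(π.act (e a + e b)) = -(e (π.σ a) + e (π.σ b)) := by
      rw [hadd, ha, hb]; push_cast; rw [one_smul, one_smul]
    rw [h1]
    constructor
    · intro hm; exact absurd hm (neg_add_not_mem _ _ hσ)
    · rintro (⟨_, h2, _⟩ | ⟨h2, _⟩ | ⟨h2, _⟩) <;> omega
  · have h1 : -(π.act (e a + e b)) = e (π.σ b) - e (π.σ a) := by
      rw [hadd, ha, hb]; push_cast; rw [one_smul, neg_one_smul]; abel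
    rw [h1, sub_mem_iff (Ne.symm hσ)]
    constructor
    · intro h'; exact Or.inl ⟨ha, hb, h'⟩
    · rintro (⟨_, _, h'⟩ | ⟨h2, _⟩ | ⟨h2, _⟩)
      · exact h'
      · omega
      · omega
  · have h1 : -(π.act (e a + e b)) = e (π.σ a) - e (π.σ b) := by
      rw [hadd, ha, hb]; push_cast; rw [one_smul, neg_one_smul]; abel
    rw [h1, sub_mem_iff hσ]
    constructor
    · intro h'; exact Or.inr (Or.inl ⟨ha, hb, h'⟩)
    · rintro (⟨h2, _⟩ | ⟨_, _, h'⟩ | ⟨_, h2⟩)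
      · omega
      · exact h'
      · omega
  · have h1 : -(π.act (e a + e b)) = e (π.σ a) + e (π.σ b) := by
      rw [hadd, ha, hb]; push_cast; rw [neg_one_smul, neg_one_smul]; abel
    rw [h1]
    exact ⟨fun _ => Or.inr (Or.inr ⟨ha, hb⟩), fun _ => add_mem hσ⟩

lemma inv_sub_iff (π : SignedPerm n) (a b : Fin n) (hab : a ≠ b) :
    -(π.act (e a - e b)) ∈ PhiPos n ↔
      (π.ε a = 1 ∧ π.ε b = 1 ∧ π.σ b < π.σ a) ∨
      (π.ε a = -1 ∧ π.ε b = 1) ∨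
      (π.ε a = -1 ∧ π.ε b = -1 ∧ π.σ a < π.σ b) := by
  have hσ : π.σ a ≠ π.σ b := fun hc => hab (π.σ.injective hc)
  have hsub : π.act (e a - e b) = (π.ε a : ℝ) • e (π.σ a) - (π.ε b : ℝ) • e (π.σ b) := by
    rw [act_sub, act_e', act_e']
  rcases π.hε a with ha | ha <;> rcases π.hε b with hb | hb
  · have h1 : -(π.act (e a - e b)) = e (π.σ b) - e (π.σ a) := by
      rw [hsub, ha, hb]; push_cast; rw [one_smul, one_smul]; abel
    rw [h1, sub_mem_iff (Ne.symm hσ)]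
    constructor
    · intro h'; exact Or.inl ⟨ha, hb, h'⟩
    · rintro (⟨_, _, h'⟩ | ⟨h2, _⟩ | ⟨h2, _⟩)
      · exact h'
      · omega
      · omega
  · have h1 : -(π.act (e a - e b)) = -(e (π.σ a) + e (π.σ b)) := by
      rw [hsub, ha, hb]; push_cast; rw [one_smul, neg_one_smul]; abel
    rw [h1]
    constructor
    · intro hm; exact absurd hm (neg_add_not_mem _ _ hσ)
    · rintro (⟨_, h2, _⟩ | ⟨h2, _⟩ | ⟨h2, _⟩) <;> omega
  · have h1 : -(π.act (e a - e b)) = e (π.σ a) + e (π.σ b) := by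
      rw [hsub, ha, hb]; push_cast; rw [one_smul, neg_one_smul]; abel
    rw [h1]
    exact ⟨fun _ => Or.inr (Or.inl ⟨ha, hb⟩), fun _ => add_mem hσ⟩
  · have h1 : -(π.act (e a - e b)) = e (π.σ a) - e (π.σ b) := by
      rw [hsub, ha, hb]; push_cast; rw [neg_one_smul, neg_one_smul]; abel
    rw [h1, sub_mem_iff hσ]
    constructor
    · intro h'; exact Or.inr (Or.inr ⟨ha, hb, h'⟩)
    · rintro (⟨h2, _⟩ | ⟨_, h2⟩ | ⟨_, _, h'⟩)
      · omega
      · omega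
      · exact h'

end SignedPerm

namespace SignedPerm

variable {n : ℕ}

open Finset

abbrev CA (π : SignedPerm n) (a b : Fin n) : Prop :=
  (π.ε a = 1 ∧ π.ε b = -1 ∧ π.σ b < π.σ a) ∨
  (π.ε a = -1 ∧ π.ε b = 1 ∧ π.σ a < π.σ b) ∨
  (π.ε a = -1 ∧ π.ε b = -1)

abbrev CS (π : SignedPerm n) (a b : Fin n) : Prop :=
  (π.ε a = 1 ∧ π.ε b = 1 ∧ π.σ b < π.σ a) ∨
  (π.ε a = -1 ∧ π.ε b = 1) ∨
  (π.ε a = -1 ∧ π.ε b = -1 ∧ π.σ a < π.σ b)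

lemma ncard_setOf {α : Type*} [Fintype α] (P : α → Prop) [DecidablePred P] :
    {x | P x}.ncard = (Finset.univ.filter P).card := by
  rw [← Set.ncard_coe_finset]
  congr 1
  ext x
  simp

lemma invi_eq (π : SignedPerm n) (i : Fin n) :
    invi i π = (if π.ε i = -1 then 1 else 0)
      + (Finset.univ.filter fun j => i < j ∧ CA π i j).card
      + (Finset.univ.filter fun j => i < j ∧ CS π i j).card := by
  classical
  have hset : {v | v ∈ PhiPosI n i ∧ -(π.act v) ∈ PhiPos n}
      = ((if π.ε i = -1 then {e i} else (∅ : Set (Fin n → ℝ)))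
          ∪ (fun j => e i + e j) '' {j | i < j ∧ CA π i j})
        ∪ (fun j => e i - e j) '' {j | i < j ∧ CS π i j} := by
    ext v
    constructor
    · rintro ⟨hm | ⟨j, hij, hm | hm⟩, hneg⟩
      · subst hm
        left; left
        rw [if_pos ((inv_e_iff π i).mp hneg)]
        exact rfl
      · subst hm
        left; right
        exact ⟨j, ⟨hij, (inv_add_iff π i j hij.ne).mp hneg⟩, rfl⟩
      · subst hm
        right
        exact ⟨j, ⟨hij, (inv_sub_iff π i j hij.ne).mp hneg⟩, rfl⟩
    · rintro ((hm | ⟨j, ⟨hij, hc⟩, rfl⟩) | ⟨j, ⟨hij, hc⟩, rfl⟩)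
      · by_cases hε : π.ε i = -1
        · rw [if_pos hε] at hm
          rw [Set.mem_singleton_iff] at hm
          subst hm
          exact ⟨Or.inl rfl, (inv_e_iff π i).mpr hε⟩
        · rw [if_neg hε] at hm
          exact absurd hm (Set.notMem_empty v)
      · exact ⟨Or.inr ⟨j, hij, Or.inl rfl⟩, (inv_add_iff π i j hij.ne).mpr hc⟩
      · exact ⟨Or.inr ⟨j, hij, Or.inr rfl⟩, (inv_sub_iff π i j hij.ne).mpr hc⟩
  have d12 : Disjoint (if π.ε i = -1 then {e i} else (∅ : Set (Fin n → ℝ)))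
      ((fun j => e i + e j) '' {j | i < j ∧ CA π i j}) := by
    rw [Set.disjoint_left]
    rintro v hv ⟨j, ⟨hij, _⟩, rfl⟩
    split_ifs at hv with h
    · rw [Set.mem_singleton_iff] at hv
      have h1 := congrFun hv j
      norm_num [e_apply, Pi.add_apply, (ne_of_gt hij)] at h1
    · exact absurd hv (Set.notMem_empty _)
  have d13 : Disjoint (if π.ε i = -1 then {e i} else (∅ : Set (Fin n → ℝ)))
      ((fun j => e i - e j) '' {j | i < j ∧ CS π i j}) := by
    rw [Set.disjoint_left]
    rintro v hv ⟨j, ⟨hij, _⟩, rfl⟩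
    split_ifs at hv with h
    · rw [Set.mem_singleton_iff] at hv
      have h1 := congrFun hv j
      norm_num [e_apply, Pi.sub_apply, (ne_of_gt hij)] at h1
    · exact absurd hv (Set.notMem_empty _)
  have d23 : Disjoint ((fun j => e i + e j) '' {j | i < j ∧ CA π i j})
      ((fun j => e i - e j) '' {j | i < j ∧ CS π i j}) := by
    rw [Set.disjoint_left]
    rintro v ⟨j, ⟨hij, _⟩, rfl⟩ ⟨j', ⟨hij', _⟩, hv⟩
    have h1 := congrFun hv j
    rcases eq_or_ne j j' with rfl | h
    · norm_num [e_apply, Pi.add_apply, Pi.sub_apply, (ne_of_gt hij)] at h1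
    · norm_num [e_apply, Pi.add_apply, Pi.sub_apply, (ne_of_gt hij), h, Ne.symm h] at h1
  have f1 : (if π.ε i = -1 then {e i} else (∅ : Set (Fin n → ℝ))).Finite := by
    split_ifs
    · exact Set.finite_singleton _
    · exact Set.finite_empty
  have f2 : ((fun j => e i + e j) '' {j | i < j ∧ CA π i j}).Finite :=
    (Set.toFinite _).image _
  have f3 : ((fun j => e i - e j) '' {j | i < j ∧ CS π i j}).Finite :=
    (Set.toFinite _).image _
  rw [invi, hset, Set.ncard_union_eq (Set.disjoint_union_left.mpr ⟨d13, d23⟩) (f1.union f2) f3,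
    Set.ncard_union_eq d12 f1 f2]
  have c1 : (if π.ε i = -1 then ({e i} : Set (Fin n → ℝ)) else ∅).ncard
      = if π.ε i = -1 then 1 else 0 := by
    split_ifs
    · exact Set.ncard_singleton _
    · exact Set.ncard_empty _
  have hinj_add : Function.Injective fun j : Fin n => e i + e j :=
    fun x y h => e_inj (add_left_cancel h)
  have hinj_sub : Function.Injective fun j : Fin n => e i - e j := by
    intro x y h
    apply e_inj
    have h' : e i - e x = e i - e y := h
    have h2 : e i - (e i - e x) = e i - (e i - e y) := by rw [h']
    simpa using h2
  rw [c1, Set.ncard_image_of_injective _ hinj_add, Set.ncard_image_of_injective _ hinj_sub,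
    ncard_setOf, ncard_setOf]

lemma invi_pos (π : SignedPerm n) (i : Fin n) (h : π.ε i = 1) :
    invi i π = (Finset.univ.filter fun j => i < j ∧ π.σ j < π.σ i).card := by
  classical
  rw [invi_eq, if_neg (by omega)]
  have hdis : Disjoint (Finset.univ.filter fun j => i < j ∧ CA π i j)
      (Finset.univ.filter fun j => i < j ∧ CS π i j) := by
    rw [Finset.disjoint_left]
    intro j hj1 hj2
    rw [Finset.mem_filter] at hj1 hj2
    rcases hj1.2.2 with ⟨_, h2, _⟩ | ⟨h2, _⟩ | ⟨h2, _⟩ <;>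
      rcases hj2.2.2 with ⟨_, h3, _⟩ | ⟨h3, _⟩ | ⟨h3, _⟩ <;> omega
  have hu : (Finset.univ.filter fun j => i < j ∧ CA π i j)
      ∪ (Finset.univ.filter fun j => i < j ∧ CS π i j)
      = Finset.univ.filter fun j => i < j ∧ π.σ j < π.σ i := by
    rw [Finset.filter_union_right]
    apply Finset.filter_congr
    intro j _
    constructor
    · rintro (⟨_, ⟨_, h2, h3⟩ | ⟨h2, _⟩ | ⟨h2, _⟩⟩ | ⟨_, ⟨_, h2, h3⟩ | ⟨h2, _⟩ | ⟨h2, _⟩⟩) <;>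
        first
          | (exfalso; omega)
          | (constructor <;> first | assumption | omega)
    · rintro ⟨hij, hσ⟩
      rcases π.hε j with hj | hj
      · exact Or.inr ⟨hij, Or.inl ⟨h, hj, hσ⟩⟩
      · exact Or.inl ⟨hij, Or.inl ⟨h, hj, hσ⟩⟩
  rw [zero_add, ← Finset.card_union_of_disjoint hdis, hu]

lemma invi_neg (π : SignedPerm n) (i : Fin n) (h : π.ε i = -1) :
    invi i π = 1 + (Finset.univ.filter fun j : Fin n => i < j).card
      + (Finset.univ.filter fun j => i < j ∧ π.σ i < π.σ j).card := by
  classical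
  rw [invi_eq, if_pos h]
  have hu : (Finset.univ.filter fun j => i < j ∧ CA π i j)
      ∪ (Finset.univ.filter fun j => i < j ∧ CS π i j)
      = Finset.univ.filter fun j : Fin n => i < j := by
    rw [Finset.filter_union_right]
    apply Finset.filter_congr
    intro j _
    constructor
    · rintro (⟨hij, _⟩ | ⟨hij, _⟩) <;> exact hij
    · intro hij
      rcases π.hε j with hj | hj
      · exact Or.inr ⟨hij, Or.inr (Or.inl ⟨h, hj⟩)⟩
      · exact Or.inl ⟨hij, Or.inr (Or.inr ⟨h, hj⟩)⟩
  have hi2 : (Finset.univ.filter fun j => i < j ∧ CA π i j)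
      ∩ (Finset.univ.filter fun j => i < j ∧ CS π i j)
      = Finset.univ.filter fun j => i < j ∧ π.σ i < π.σ j := by
    ext j
    simp only [Finset.mem_inter, Finset.mem_filter, Finset.mem_univ, true_and]
    constructor
    · rintro ⟨⟨hij, hca⟩, ⟨_, hcs⟩⟩
      refine ⟨hij, ?_⟩
      rcases hca with ⟨h1, _, _⟩ | ⟨_, _, h3⟩ | ⟨_, h2⟩
      · omega
      · exact h3
      · rcases hcs with ⟨h1, _, _⟩ | ⟨_, h3⟩ | ⟨_, _, h3⟩
        · omega
        · omega
        · exact h3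
    · rintro ⟨hij, hσ⟩
      rcases π.hε j with hj | hj
      · exact ⟨⟨hij, Or.inr (Or.inl ⟨h, hj, hσ⟩)⟩, ⟨hij, Or.inr (Or.inl ⟨h, hj⟩)⟩⟩
      · exact ⟨⟨hij, Or.inr (Or.inr ⟨h, hj⟩)⟩, ⟨hij, Or.inr (Or.inr ⟨h, hj, hσ⟩)⟩⟩
  have := Finset.card_union_add_card_inter
    (Finset.univ.filter fun j => i < j ∧ CA π i j)
    (Finset.univ.filter fun j => i < j ∧ CS π i j)
  rw [hu, hi2] at this
  omega

end SignedPerm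

namespace SignedPerm

variable {n : ℕ}

open Finset

lemma inv_eq (π : SignedPerm n) :
    inv π = (Finset.univ.filter fun k : Fin n => π.ε k = -1).card
      + (Finset.univ.filter fun p : Fin n × Fin n => p.1 < p.2 ∧ CA π p.1 p.2).card
      + (Finset.univ.filter fun p : Fin n × Fin n => p.1 < p.2 ∧ CS π p.1 p.2).card := by
  classical
  have hset : {v | v ∈ PhiPos n ∧ -(π.act v) ∈ PhiPos n}
      = ((e '' {k | π.ε k = -1})
          ∪ (fun p : Fin n × Fin n => e p.1 + e p.2) '' {p | p.1 < p.2 ∧ CA π p.1 p.2})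
        ∪ (fun p : Fin n × Fin n => e p.1 - e p.2) '' {p | p.1 < p.2 ∧ CS π p.1 p.2} := by
    ext v
    constructor
    · rintro ⟨⟨k, hm⟩ | ⟨a, b, hab, hm | hm⟩, hneg⟩
      · subst hm
        exact Or.inl (Or.inl ⟨k, (inv_e_iff π k).mp hneg, rfl⟩)
      · subst hm
        exact Or.inl (Or.inr ⟨(a, b), ⟨hab, (inv_add_iff π a b hab.ne).mp hneg⟩, rfl⟩)
      · subst hm
        exact Or.inr ⟨(a, b), ⟨hab, (inv_sub_iff π a b hab.ne).mp hneg⟩, rfl⟩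
    · rintro ((⟨k, hk, rfl⟩ | ⟨⟨a, b⟩, ⟨hab, hc⟩, rfl⟩) | ⟨⟨a, b⟩, ⟨hab, hc⟩, rfl⟩)
      · exact ⟨e_mem k, (inv_e_iff π k).mpr hk⟩
      · exact ⟨Or.inr ⟨a, b, hab, Or.inl rfl⟩, (inv_add_iff π a b hab.ne).mpr hc⟩
      · exact ⟨Or.inr ⟨a, b, hab, Or.inr rfl⟩, (inv_sub_iff π a b hab.ne).mpr hc⟩
  have d12 : Disjoint (e '' {k | π.ε k = -1})
      ((fun p : Fin n × Fin n => e p.1 + e p.2) '' {p | p.1 < p.2 ∧ CA π p.1 p.2}) := by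
    rw [Set.disjoint_left]
    rintro v ⟨k, _, rfl⟩ ⟨⟨a, b⟩, ⟨hab, _⟩, hv⟩
    -- hv : e a + e b = e k
    have h1 := congrFun hv a
    have h2 := congrFun hv b
    rcases eq_or_ne a k with rfl | h
    · norm_num [e_apply, hab.ne, hab.ne'] at h2
    · norm_num [e_apply, hab.ne, hab.ne', h, Ne.symm h] at h1
  have d13 : Disjoint (e '' {k | π.ε k = -1})
      ((fun p : Fin n × Fin n => e p.1 - e p.2) '' {p | p.1 < p.2 ∧ CS π p.1 p.2}) := by
    rw [Set.disjoint_left]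
    rintro v ⟨k, _, rfl⟩ ⟨⟨a, b⟩, ⟨hab, _⟩, hv⟩
    have h2 := congrFun hv b
    rcases eq_or_ne b k with rfl | h
    · norm_num [e_apply, hab.ne, hab.ne'] at h2
    · norm_num [e_apply, hab.ne, hab.ne', h, Ne.symm h] at h2
  have d23 : Disjoint
      ((fun p : Fin n × Fin n => e p.1 + e p.2) '' {p | p.1 < p.2 ∧ CA π p.1 p.2})
      ((fun p : Fin n × Fin n => e p.1 - e p.2) '' {p | p.1 < p.2 ∧ CS π p.1 p.2}) := by
    rw [Set.disjoint_left]
    rintro v ⟨⟨a, b⟩, ⟨hab, _⟩, rfl⟩ ⟨⟨c, d⟩, ⟨hcd, _⟩, hv⟩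
    -- hv : e c - e d = e a + e b
    have h1 := congrFun hv d
    rcases eq_or_ne d a with rfl | h
    · norm_num [e_apply, hab.ne, hab.ne', hcd.ne, hcd.ne'] at h1
    · rcases eq_or_ne d b with rfl | h'
      · norm_num [e_apply, hab.ne, hab.ne', hcd.ne, hcd.ne', h, Ne.symm h] at h1
      · norm_num [e_apply, hab.ne, hab.ne', hcd.ne, hcd.ne', h, Ne.symm h, h', Ne.symm h'] at h1
  have f1 : (e '' {k : Fin n | π.ε k = -1}).Finite := (Set.toFinite _).image _
  have f2 : ((fun p : Fin n × Fin n => e p.1 + e p.2) '' {p | p.1 < p.2 ∧ CA π p.1 p.2}).Finite :=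
    (Set.toFinite _).image _
  have f3 : ((fun p : Fin n × Fin n => e p.1 - e p.2) '' {p | p.1 < p.2 ∧ CS π p.1 p.2}).Finite :=
    (Set.toFinite _).image _
  have hinj_add : Set.InjOn (fun p : Fin n × Fin n => e p.1 + e p.2)
      {p | p.1 < p.2 ∧ CA π p.1 p.2} := by
    rintro ⟨a, b⟩ ⟨hab, _⟩ ⟨c, d⟩ ⟨hcd, _⟩ h
    have h' : e a + e b = e c + e d := h
    have hac : a = c := by
      by_contra hac
      have had : a = d := by
        rcases eq_or_ne a d with h2 | h2
        · exact h2
        · have h1 := congrFun h' a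
          norm_num [e_apply, hab.ne, hab.ne', hac, Ne.symm hac, h2, Ne.symm h2] at h1
      have hcb : c = b := by
        rcases eq_or_ne c b with h2 | h2
        · exact h2
        · have h1 := congrFun h' c
          norm_num [e_apply, hab.ne, hab.ne', hcd.ne, hcd.ne', hac, Ne.symm hac,
            h2, Ne.symm h2] at h1
      subst had
      subst hcb
      exact absurd (hab.trans hcd) (lt_irrefl _)
    subst hac
    have hbd : b = d := e_inj (add_left_cancel h')
    rw [hbd]
  have hinj_sub : Set.InjOn (fun p : Fin n × Fin n => e p.1 - e p.2)
      {p | p.1 < p.2 ∧ CS π p.1 p.2} := by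
    rintro ⟨a, b⟩ ⟨hab, _⟩ ⟨c, d⟩ ⟨hcd, _⟩ h
    have h' : e a - e b = e c - e d := h
    have hac : a = c := by
      by_contra hac
      have h1 := congrFun h' a
      rcases eq_or_ne a d with rfl | h2
      · norm_num [e_apply, hab.ne, hab.ne', hac, Ne.symm hac] at h1
      · norm_num [e_apply, hab.ne, hab.ne', hac, Ne.symm hac, h2, Ne.symm h2] at h1
    subst hac
    have hbd : b = d := by
      apply e_inj
      have h2 : e a - (e a - e b) = e a - (e a - e d) := by rw [h']
      simpa using h2
    rw [hbd]
  rw [inv, hset, Set.ncard_union_eq (Set.disjoint_union_left.mpr ⟨d13, d23⟩) (f1.union f2) f3,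
    Set.ncard_union_eq d12 f1 f2, Set.ncard_image_of_injective _ e_inj,
    Set.ncard_image_of_injOn hinj_add, Set.ncard_image_of_injOn hinj_sub,
    ncard_setOf, ncard_setOf, ncard_setOf]

lemma inv_parity (π : SignedPerm n) :
    Even (inv π) ↔ Even ((Finset.univ.filter fun k : Fin n => π.ε k = -1).card
      + (Finset.univ.filter fun p : Fin n × Fin n => p.1 < p.2 ∧ π.σ p.2 < π.σ p.1).card) := by
  classical
  have key : Even ((Finset.univ.filter fun p : Fin n × Fin n => p.1 < p.2 ∧ CA π p.1 p.2).card
      + (Finset.univ.filter fun p : Fin n × Fin n => p.1 < p.2 ∧ CS π p.1 p.2).card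
      + (Finset.univ.filter fun p : Fin n × Fin n => p.1 < p.2 ∧ π.σ p.2 < π.σ p.1).card) := by
    have hc : ∀ (P : Fin n × Fin n → Prop) [DecidablePred P],
        (Finset.univ.filter P).card = ∑ p : Fin n × Fin n, (if P p then 1 else 0) := by
      intro P _
      rw [← Finset.natCast_card_filter]
      simp
    rw [hc, hc, hc, ← Finset.sum_add_distrib, ← Finset.sum_add_distrib]
    apply Finset.even_sum
    intro p _
    by_cases hp : p.1 < p.2
    · have hσ : π.σ p.1 ≠ π.σ p.2 := fun hc' => (ne_of_lt hp) (π.σ.injective hc')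
      rcases π.hε p.1 with h1 | h1 <;> rcases π.hε p.2 with h2 | h2 <;>
        rcases lt_trichotomy (π.σ p.1) (π.σ p.2) with h3 | h3 | h3 <;>
          first
            | exact absurd h3 hσ
            | (simp only [CA, CS, h1, h2, hp, true_and, h3, asymm h3, lt_irrefl]
               norm_num
               first
                 | decide
                 | (simp [not_lt_of_gt h3, h3, le_of_lt h3])
                 | skip)
    · simp [hp]
  rw [inv_eq, Nat.even_iff, Nat.even_iff]
  rw [Nat.even_iff] at key
  omega

end SignedPerm

namespace SignedPerm

variable {n : ℕ}

open Finset

lemma filter_lt_card (i : Fin n) :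
    (Finset.univ.filter fun j : Fin n => i < j).card = n - 1 - i.val := by
  have : (Finset.univ.filter fun j : Fin n => i < j) = Finset.Ioi i := by
    ext j; simp
  rw [this, Fin.card_Ioi]

lemma card_lt_swap (i q : Fin n) (hiq : i ≤ q) :
    (Finset.univ.filter fun j => i < j ∧ (Equiv.swap i q) j < (Equiv.swap i q) i).card
      = q.val - i.val := by
  have hfe : (Finset.univ.filter fun j => i < j ∧ (Equiv.swap i q) j < (Equiv.swap i q) i)
      = Finset.Ioc i q := by
    ext j
    simp only [Finset.mem_filter, Finset.mem_univ, true_and, Finset.mem_Ioc,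
      Equiv.swap_apply_left]
    constructor
    · rintro ⟨hij, hlt⟩
      refine ⟨hij, ?_⟩
      by_cases hjq : j = q
      · exact le_of_eq hjq
      · rw [Equiv.swap_apply_of_ne_of_ne (ne_of_gt hij) hjq] at hlt
        exact le_of_lt hlt
    · rintro ⟨hij, hjq⟩
      refine ⟨hij, ?_⟩
      by_cases hq : j = q
      · subst hq
        rw [Equiv.swap_apply_right]
        exact lt_of_lt_of_le hij hjq
      · rw [Equiv.swap_apply_of_ne_of_ne (ne_of_gt hij) hq]
        exact lt_of_le_of_ne hjq hq
  rw [hfe, Fin.card_Ioc]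

lemma card_gt_swap (i q : Fin n) (hiq : i ≤ q) :
    (Finset.univ.filter fun j => i < j ∧ (Equiv.swap i q) i < (Equiv.swap i q) j).card
      = n - 1 - q.val := by
  classical
  have hdis : Disjoint (Finset.univ.filter fun j => i < j ∧ (Equiv.swap i q) j < (Equiv.swap i q) i)
      (Finset.univ.filter fun j => i < j ∧ (Equiv.swap i q) i < (Equiv.swap i q) j) := by
    rw [Finset.disjoint_left]
    intro j hj1 hj2
    rw [Finset.mem_filter] at hj1 hj2
    exact absurd (hj1.2.2.trans hj2.2.2) (lt_irrefl _)
  have hu : (Finset.univ.filter fun j => i < j ∧ (Equiv.swap i q) j < (Equiv.swap i q) i)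
      ∪ (Finset.univ.filter fun j => i < j ∧ (Equiv.swap i q) i < (Equiv.swap i q) j)
      = Finset.univ.filter fun j : Fin n => i < j := by
    rw [Finset.filter_union_right]
    apply Finset.filter_congr
    intro j _
    constructor
    · rintro (⟨hij, _⟩ | ⟨hij, _⟩) <;> exact hij
    · intro hij
      rcases lt_or_gt_of_ne (fun hc : (Equiv.swap i q) j = (Equiv.swap i q) i =>
        (ne_of_gt hij) ((Equiv.swap i q).injective hc)) with h | h
      · exact Or.inl ⟨hij, h⟩
      · exact Or.inr ⟨hij, h⟩
  have htot := Finset.card_union_of_disjoint hdis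
  rw [hu, filter_lt_card, card_lt_swap i q hiq] at htot
  have hq : q.val < n := q.isLt
  have hi : i.val ≤ q.val := hiq
  omega

def fam (i q L : Fin n) (s b : Bool) : SignedPerm n where
  σ := Equiv.swap i q
  ε := fun j => if j = i then (if s then 1 else -1) else if j = L then (if b then 1 else -1) else 1
  hε := by
    intro j
    split_ifs <;> simp

lemma fam_sigma (i q L : Fin n) (s b : Bool) : (fam i q L s b).σ = Equiv.swap i q := rfl

lemma fam_eps_i (i q L : Fin n) (s b : Bool) :
    (fam i q L s b).ε i = if s then 1 else -1 := by
  simp [fam]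

lemma fam_N (i q L : Fin n) (s b : Bool) (hLi : L ≠ i) :
    (Finset.univ.filter fun j => (fam i q L s b).ε j = -1).card
      = (if s then 0 else 1) + (if b then 0 else 1) := by
  classical
  cases s <;> cases b
  · -- s = false, b = false : {i, L}
    have hfe : (Finset.univ.filter fun j => (fam i q L false false).ε j = -1) = {i, L} := by
      ext j
      by_cases hji : j = i <;> by_cases hjL : j = L <;>
        simp [fam, hji, hjL] <;> omega
    rw [hfe]
    rw [Finset.card_insert_of_notMem (by simp [Ne.symm hLi]), Finset.card_singleton]
    norm_num
  · -- s = false, b = true : {i}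
    have hfe : (Finset.univ.filter fun j => (fam i q L false true).ε j = -1) = {i} := by
      ext j
      by_cases hji : j = i <;> by_cases hjL : j = L <;>
        simp [fam, hji, hjL] <;> omega
    rw [hfe, Finset.card_singleton]
    norm_num
  · -- s = true, b = false : {L}
    have hfe : (Finset.univ.filter fun j => (fam i q L true false).ε j = -1) = {L} := by
      ext j
      by_cases hji : j = i <;> by_cases hjL : j = L <;>
        simp [fam, hji, hjL] <;> omega
    rw [hfe, Finset.card_singleton]
    norm_num
  · have hfe : (Finset.univ.filter fun j => (fam i q L true true).ε j = -1) = ∅ := by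
      ext j
      by_cases hji : j = i <;> by_cases hjL : j = L <;>
        simp [fam, hji, hjL] <;> omega
    rw [hfe, Finset.card_empty]
    norm_num

end SignedPerm

open SignedPerm in
/-- For `i ∈ [n-1]`, the image of `invᵢ` on the even signed
permutation group `Dₙ ⊆ Bₙ` (an even number of negative signs) and its image on
the signed even permutation group `Fₙ ⊆ Bₙ` (those `π` with `inv π` even) are
both exactly `{0, 1, …, 2(n-i)+1}` (position `i ∈ [n-1]` is `i.val + 1` in
1-based indexing). -/
theorem invi_image_D_F (n : ℕ) (hn : 2 ≤ n) (i : Fin n) (hi : i.val + 1 ≤ n - 1) :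
    (fun π : SignedPerm n => invi i π) ''
        {π : SignedPerm n | Even (Finset.univ.filter fun j : Fin n => π.ε j = -1).card}
      = {m : ℕ | m ≤ 2 * (n - (i.val + 1)) + 1} ∧
    (fun π : SignedPerm n => invi i π) '' {π : SignedPerm n | Even (SignedPerm.inv π)}
      = {m : ℕ | m ≤ 2 * (n - (i.val + 1)) + 1} := by
  classical
  have hub : ∀ π : SignedPerm n, invi i π ≤ 2 * (n - (i.val + 1)) + 1 := by
    intro π
    rw [invi_eq]
    have h1 : (Finset.univ.filter fun j => i < j ∧ CA π i j).card
        ≤ (Finset.univ.filter fun j : Fin n => i < j).card :=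
      Finset.card_le_card (fun j hj => by
        rw [Finset.mem_filter] at *
        exact ⟨hj.1, hj.2.1⟩)
    have h2 : (Finset.univ.filter fun j => i < j ∧ CS π i j).card
        ≤ (Finset.univ.filter fun j : Fin n => i < j).card :=
      Finset.card_le_card (fun j hj => by
        rw [Finset.mem_filter] at *
        exact ⟨hj.1, hj.2.1⟩)
    have h3 := filter_lt_card i
    have hiv : i.val < n := i.isLt
    split_ifs <;> omega
  have hL : n - 1 < n := by omega
  set L : Fin n := ⟨n - 1, hL⟩ with hLdef
  have hLi : L ≠ i := by
    refine Fin.ne_of_val_ne ?_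
    show n - 1 ≠ i.val
    omega
  have hbuild : ∀ m, m ≤ 2 * (n - (i.val + 1)) + 1 → ∃ (q : Fin n) (s : Bool),
      ∀ b : Bool, invi i (fam i q L s b) = m := by
    intro m hm
    by_cases hcase : m ≤ n - 1 - i.val
    · have hq : i.val + m < n := by omega
      have hle : i ≤ (⟨i.val + m, hq⟩ : Fin n) := by
        rw [Fin.le_def]
        show i.val ≤ i.val + m
        omega
      refine ⟨⟨i.val + m, hq⟩, true, fun b => ?_⟩
      rw [invi_pos _ _ (by simp [fam_eps_i])]
      rw [fam_sigma]
      rw [card_lt_swap i _ hle]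
      show i.val + m - i.val = m
      omega
    · push_neg at hcase
      have hq : i.val + (n - 1 - i.val - (m - (n - 1 - i.val + 1))) < n := by omega
      have hle : i ≤ (⟨i.val + (n - 1 - i.val - (m - (n - 1 - i.val + 1))), hq⟩ : Fin n) := by
        rw [Fin.le_def]
        show i.val ≤ i.val + _
        omega
      refine ⟨⟨i.val + (n - 1 - i.val - (m - (n - 1 - i.val + 1))), hq⟩, false, fun b => ?_⟩
      rw [invi_neg _ _ (by simp [fam_eps_i])]
      rw [fam_sigma]
      rw [filter_lt_card, card_gt_swap i _ hle]
      show 1 + (n - 1 - i.val)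
        + (n - 1 - (i.val + (n - 1 - i.val - (m - (n - 1 - i.val + 1))))) = m
      omega
  constructor
  · ext m
    simp only [Set.mem_image, Set.mem_setOf_eq]
    constructor
    · rintro ⟨π, hπ, rfl⟩
      exact hub π
    · intro hm
      obtain ⟨q, s, hq⟩ := hbuild m hm
      refine ⟨fam i q L s s, ?_, hq s⟩
      rw [fam_N i q L s s hLi]
      cases s
      · exact ⟨1, by norm_num⟩
      · exact ⟨0, by norm_num⟩
  · ext m
    simp only [Set.mem_image, Set.mem_setOf_eq]
    constructor
    · rintro ⟨π, hπ, rfl⟩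
      exact hub π
    · intro hm
      obtain ⟨q, s, hq⟩ := hbuild m hm
      by_cases hpar : Even ((Finset.univ.filter fun p : Fin n × Fin n =>
          p.1 < p.2 ∧ (Equiv.swap i q) p.2 < (Equiv.swap i q) p.1).card)
      · refine ⟨fam i q L s s, ?_, hq s⟩
        rw [inv_parity]
        rw [fam_sigma]
        rw [fam_N i q L s s hLi]
        rw [Nat.even_iff] at hpar ⊢
        cases s <;> simp <;> omega
      · refine ⟨fam i q L s (!s), ?_, hq (!s)⟩
        rw [inv_parity]
        rw [fam_sigma]
        rw [fam_N i q L s (!s) hLi]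
        rw [Nat.not_even_iff] at hpar
        rw [Nat.even_iff]
        cases s <;> simp <;> omega
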